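/- sup_p τ_p^{1/p} = √(2k-1)/k, where τ_p is the probability that a uniform random word of length p over 2k letters represents the identity in the free group F_k. In particular for k = 2 this spectral radius equals √3/2. -/

import Mathlib

abbrev Letter (k : ℕ) := Fin k × Bool

/-- `τ_p`: the probability that a uniformly random word of length `p` over the `2k`-letter
alphabet represents the identity of the free group `F_k`. -/
noncomputable def tau (k p : ℕ) : ℝ :=
  (Nat.card {w : Fin p → Letter k // FreeGroup.mk (List.ofFn w) = 1}) / (2 * k) ^ p

open Finset

namespace SupTau

def cnt (k n h : ℕ) : ℕ :=
  (Finset.univ.filter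
    (fun w : Fin n → Letter k => (FreeGroup.reduce (List.ofFn w)).length = h)).card

lemma cnt_zero_zero (k : ℕ) : cnt k 0 0 = 1 := by
  simp [cnt]

lemma cnt_zero_succ (k h : ℕ) : cnt k 0 (h + 1) = 0 := by
  simp [cnt]

lemma reduce_length_parity {α : Type*} [DecidableEq α] (L : List (α × Bool)) :
    (FreeGroup.reduce L).length % 2 = L.length % 2 := by
  induction L with
  | nil => rfl
  | cons x L ih =>
    rw [FreeGroup.reduce.cons]
    rcases h : FreeGroup.reduce L with _ | ⟨y, t⟩
    · rw [h] at ih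
      simp at ih ⊢
      omega
    · rw [h] at ih
      by_cases hc : x.1 = y.1 ∧ x.2 = !y.2
      · simp only [List.casesOn, hc, and_self, if_true]
        simp at ih ⊢
        omega
      · simp only [List.casesOn, hc, if_false]
        simp at ih ⊢
        omega

lemma cnt_parity (k n h : ℕ) (hp : (n + h) % 2 = 1) : cnt k n h = 0 := by
  rw [cnt, Finset.card_eq_zero, Finset.filter_eq_empty_iff]
  intro w _
  intro hlen
  have := reduce_length_parity (List.ofFn w)
  rw [hlen, List.length_ofFn] at this
  omega

lemma cnt_succ_sum (k n h : ℕ) :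
    cnt k (n + 1) h = ∑ w : Fin n → Letter k,
      (Finset.univ.filter
        (fun x : Letter k => (FreeGroup.reduce (x :: List.ofFn w)).length = h)).card := by
  classical
  rw [cnt, ← Fintype.card_subtype]
  have e1 : {w : Fin (n+1) → Letter k // (FreeGroup.reduce (List.ofFn w)).length = h} ≃
      {p : (Fin n → Letter k) × Letter k //
        (FreeGroup.reduce (p.2 :: List.ofFn p.1)).length = h} :=
    Equiv.subtypeEquiv ((Fin.consEquiv fun _ => Letter k).symm.trans (Equiv.prodComm _ _)) (fun w => by
      simp only [Equiv.trans_apply, Equiv.prodComm_apply, Prod.swap]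
      rw [List.ofFn_succ]
      rfl)
  rw [Fintype.card_congr e1]
  rw [Fintype.card_congr (Equiv.subtypeProdEquivSigmaSubtype
    (fun (w : Fin n → Letter k) (x : Letter k) =>
      (FreeGroup.reduce (x :: List.ofFn w)).length = h))]
  rw [Fintype.card_sigma]
  congr 1
  ext w
  rw [Fintype.card_subtype]

lemma card_letter (k : ℕ) : Fintype.card (Letter k) = 2 * k := by
  simp [Fintype.card_prod, mul_comm]

lemma card_step_nil {k : ℕ} {L : List (Letter k)} (hr : FreeGroup.reduce L = []) (h : ℕ) :
    (Finset.univ.filter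
      (fun x : Letter k => (FreeGroup.reduce (x :: L)).length = h)).card =
    if h = 1 then 2 * k else 0 := by
  have hx : ∀ x : Letter k, FreeGroup.reduce (x :: L) = [x] := by
    intro x; rw [FreeGroup.reduce.cons, hr]
  by_cases h1 : h = 1
  · subst h1
    rw [Finset.filter_true_of_mem (fun x _ => by rw [hx x]; rfl), Finset.card_univ, card_letter]
    simp
  · rw [Finset.filter_false_of_mem (fun x _ => by rw [hx x]; simp; omega), Finset.card_empty]
    simp [h1]

lemma card_step_cons {k : ℕ} {L : List (Letter k)} {y : Letter k} {t : List (Letter k)}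
    (hr : FreeGroup.reduce L = y :: t) (h : ℕ) :
    (Finset.univ.filter
      (fun x : Letter k => (FreeGroup.reduce (x :: L)).length = h)).card =
    (if h = t.length + 2 then 2 * k - 1 else 0) + (if h = t.length then 1 else 0) := by
  classical
  have hx : ∀ x : Letter k, FreeGroup.reduce (x :: L) =
      if x.1 = y.1 ∧ x.2 = !y.2 then t else x :: y :: t := by
    intro x; rw [FreeGroup.reduce.cons, hr]
  set ybar : Letter k := (y.1, !y.2) with hybar
  have hiff : ∀ x : Letter k, (x.1 = y.1 ∧ x.2 = !y.2) ↔ x = ybar := by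
    intro x
    constructor
    · rintro ⟨h1, h2⟩; exact Prod.ext h1 h2
    · rintro rfl; exact ⟨rfl, rfl⟩
  have hxval : ∀ x : Letter k, (FreeGroup.reduce (x :: L)).length =
      if x = ybar then t.length else t.length + 2 := by
    intro x
    rw [hx x]
    by_cases hc : x = ybar
    · rw [if_pos ((hiff x).mpr hc), if_pos hc]
    · rw [if_neg (fun hh => hc ((hiff x).mp hh)), if_neg hc]
      simp
  have hsplit : (Finset.univ.filter
      (fun x : Letter k => (FreeGroup.reduce (x :: L)).length = h)) =
      (Finset.univ.filter (fun x : Letter k =>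
        (if x = ybar then t.length else t.length + 2) = h)) := by
    apply Finset.filter_congr
    intro x _
    rw [hxval x]
  rw [hsplit]
  by_cases hht : h = t.length
  · subst hht
    have : (Finset.univ.filter (fun x : Letter k =>
        (if x = ybar then t.length else t.length + 2) = t.length)) = {ybar} := by
      ext x
      simp only [Finset.mem_filter, Finset.mem_univ, true_and, Finset.mem_singleton]
      by_cases hc : x = ybar <;> simp [hc]
    rw [this]
    simp
  · by_cases hh2 : h = t.length + 2
    · subst hh2
      have : (Finset.univ.filter (fun x : Letter k =>
          (if x = ybar then t.length else t.length + 2) = t.length + 2)) =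
          Finset.univ.erase ybar := by
        ext x
        simp only [Finset.mem_filter, Finset.mem_univ, true_and, Finset.mem_erase, and_true]
        by_cases hc : x = ybar <;> simp [hc]
       
      rw [this, Finset.card_erase_of_mem (Finset.mem_univ _), Finset.card_univ, card_letter]
      have h2 : ¬ (t.length + 2 = t.length) := by omega
      rw [if_pos rfl, if_neg h2]
      omega
    · rw [Finset.filter_false_of_mem, Finset.card_empty]
      · simp [hht, hh2]
      · intro x _
        by_cases hc : x = ybar <;> simp [hc] <;> omega



def gval (k h l : ℕ) : ℕ :=
  if l = 0 then (if h = 1 then 2 * k else 0)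
  else ((if h = l + 1 then 2 * k - 1 else 0) + (if h = l - 1 then 1 else 0))

lemma card_step_gval {k : ℕ} (L : List (Letter k)) (h : ℕ) :
    (Finset.univ.filter
      (fun x : Letter k => (FreeGroup.reduce (x :: L)).length = h)).card =
    gval k h ((FreeGroup.reduce L).length) := by
  rcases hr : FreeGroup.reduce L with _ | ⟨y, t⟩
  · rw [card_step_nil hr, gval]
    simp
  · rw [card_step_cons hr, gval]
    simp only [List.length_cons]
    rw [if_neg (by omega : ¬ t.length + 1 = 0)]
    norm_num

lemma sum_ite_cnt (k n c A : ℕ) :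
    (∑ w : Fin n → Letter k,
      (if (FreeGroup.reduce (List.ofFn w)).length = c then A else 0)) = A * cnt k n c := by
  classical
  rw [← Finset.sum_filter]
  rw [Finset.sum_const, cnt, smul_eq_mul, mul_comm]

lemma cnt_succ_zero (k n : ℕ) : cnt k (n + 1) 0 = cnt k n 1 := by
  rw [cnt_succ_sum]
  have : ∀ w : Fin n → Letter k,
      (Finset.univ.filter
        (fun x : Letter k => (FreeGroup.reduce (x :: List.ofFn w)).length = 0)).card =
      (if (FreeGroup.reduce (List.ofFn w)).length = 1 then 1 else 0) := by
    intro w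
    rw [card_step_gval, gval]
    split_ifs <;> first | omega | exact absurd rfl (by omega) | exact (‹False›).elim
  rw [Finset.sum_congr rfl (fun w _ => this w), sum_ite_cnt, one_mul]

lemma cnt_succ_one (k n : ℕ) :
    cnt k (n + 1) 1 = 2 * k * cnt k n 0 + cnt k n 2 := by
  classical
  rw [cnt_succ_sum]
  have : ∀ w : Fin n → Letter k,
      (Finset.univ.filter
        (fun x : Letter k => (FreeGroup.reduce (x :: List.ofFn w)).length = 1)).card =
      (if (FreeGroup.reduce (List.ofFn w)).length = 0 then 2 * k else 0) +
      (if (FreeGroup.reduce (List.ofFn w)).length = 2 then 1 else 0) := by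
    intro w
    rw [card_step_gval, gval]
    split_ifs <;> first | omega | exact absurd rfl (by omega) | exact (‹False›).elim
  rw [Finset.sum_congr rfl (fun w _ => this w), Finset.sum_add_distrib, sum_ite_cnt,
    sum_ite_cnt, one_mul]

lemma cnt_succ_two (k n H : ℕ) :
    cnt k (n + 1) (H + 2) = (2 * k - 1) * cnt k n (H + 1) + cnt k n (H + 3) := by
  classical
  rw [cnt_succ_sum]
  have : ∀ w : Fin n → Letter k,
      (Finset.univ.filter
        (fun x : Letter k => (FreeGroup.reduce (x :: List.ofFn w)).length = (H + 2))).card =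
      (if (FreeGroup.reduce (List.ofFn w)).length = H + 1 then 2 * k - 1 else 0) +
      (if (FreeGroup.reduce (List.ofFn w)).length = H + 3 then 1 else 0) := by
    intro w
    rw [card_step_gval, gval]
    split_ifs <;> first | omega | exact absurd rfl (by omega) | exact (‹False›).elim
  rw [Finset.sum_congr rfl (fun w _ => this w), Finset.sum_add_distrib, sum_ite_cnt,
    sum_ite_cnt, one_mul]


def qb (k n h : ℕ) : ℕ :=
  if (n + h) % 2 = 0 then n.choose ((n + h) / 2) * (2 * k - 1) ^ ((n + h) / 2) else 0

def eb (k n h : ℕ) : ℕ :=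
  if (n + h) % 2 = 0 then
    (n.choose ((n + h) / 2) - n.choose ((n + h) / 2 + 1)) * (2 * k - 1) ^ ((n + h) / 2)
  else 0

lemma choose_decr {n s : ℕ} (h : n ≤ 2 * s) : n.choose (s + 1) ≤ n.choose s := by
  rcases le_or_gt n s with hns | hns
  · rcases eq_or_lt_of_le hns with rfl | hlt
    · simp [Nat.choose_self, Nat.choose_succ_self]
    · rw [Nat.choose_eq_zero_of_lt (by omega), Nat.choose_eq_zero_of_lt hlt]
  · have h1 : n.choose (s + 1) = n.choose (n - (s + 1)) := (Nat.choose_symm (by omega)).symm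
    have h2 : n.choose s = n.choose (n - s) := (Nat.choose_symm (by omega)).symm
    rw [h1, h2]
    have h3 : n - s = (n - (s + 1)) + 1 := by omega
    rw [h3]
    rcases Nat.lt_or_ge (n - (s + 1)) (n / 2) with hh | hh
    · exact Nat.choose_le_succ_of_lt_half_left hh
    · exfalso; omega

lemma qb_pascal (k n h : ℕ) :
    qb k (n + 1) (h + 1) = (2 * k - 1) * qb k n h + qb k n (h + 2) := by
  rcases Nat.eq_zero_or_pos ((n + h) % 2) with hp | hp
  · have c1 : (n + 1 + (h + 1)) % 2 = 0 := by omega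
    have c2 : (n + (h + 2)) % 2 = 0 := by omega
    rw [qb, qb, qb, if_pos c1, if_pos hp, if_pos c2]
    have u1 : (n + 1 + (h + 1)) / 2 = (n + h) / 2 + 1 := by omega
    have u2 : (n + (h + 2)) / 2 = (n + h) / 2 + 1 := by omega
    rw [u1, u2, Nat.choose_succ_succ']
    ring
  · have c0 : ¬ (n + h) % 2 = 0 := by omega
    have c1 : ¬ (n + 1 + (h + 1)) % 2 = 0 := by omega
    have c2 : ¬ (n + (h + 2)) % 2 = 0 := by omega
    rw [qb, qb, qb, if_neg c1, if_neg c0, if_neg c2]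
    simp

lemma qb_zero_step (k n : ℕ) : 2 * qb k n 1 ≤ qb k (n + 1) 0 := by
  rcases Nat.eq_zero_or_pos ((n + 1) % 2) with hp | hp
  · rw [qb, qb, if_pos (by omega : (n + 1 + 0) % 2 = 0), if_pos hp]
    have hn1 : 1 ≤ n := by omega
    set u := (n + 1) / 2 with hu
    have hu1 : 1 ≤ u := by omega
    have pasc : (n + 1).choose u = n.choose (u - 1) + n.choose u := by
      have h5 := Nat.choose_succ_succ' n (u - 1)
      have h6 : u - 1 + 1 = u := by omega
      rw [h6] at h5
      exact h5
    have symm : n.choose (u - 1) = n.choose u := by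
      have hnu : n - u = u - 1 := by omega
      have := Nat.choose_symm (by omega : u ≤ n)
      rw [hnu] at this
      exact this
    apply le_of_eq
    rw [pasc, symm]
    ring
  · rw [qb, qb, if_neg (by omega : ¬ (n + 1 + 0) % 2 = 0), if_neg (by omega)]

lemma eb_pascal_le (k n h : ℕ) :
    eb k (n + 1) (h + 1) ≤ (2 * k - 1) * eb k n h + eb k n (h + 2) := by
  rcases Nat.eq_zero_or_pos ((n + h) % 2) with hp | hp
  · have c1 : (n + 1 + (h + 1)) % 2 = 0 := by omega
    have c2 : (n + (h + 2)) % 2 = 0 := by omega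
    rw [eb, eb, eb, if_pos c1, if_pos hp, if_pos c2]
    set v := (n + h) / 2 with hv
    have u1 : (n + 1 + (h + 1)) / 2 = v + 1 := by omega
    have u2 : (n + (h + 2)) / 2 = v + 1 := by omega
    rw [u1, u2]
    have pasc1 : (n + 1).choose (v + 1) = n.choose v + n.choose (v + 1) :=
      Nat.choose_succ_succ' n v
    have pasc2 : (n + 1).choose (v + 2) = n.choose (v + 1) + n.choose (v + 2) :=
      Nat.choose_succ_succ' n (v + 1)
    have d1 : n.choose (v + 1) ≤ n.choose v := choose_decr (by omega)
    have d2 : n.choose (v + 2) ≤ n.choose (v + 1) := choose_decr (by omega)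
    rw [pasc1, pasc2]
    have key : (n.choose v + n.choose (v + 1)) - (n.choose (v + 1) + n.choose (v + 2)) =
        (n.choose v - n.choose (v + 1)) + (n.choose (v + 1) - n.choose (v + 2)) := by
      omega
    rw [key, Nat.add_mul]
    have : (2 * k - 1) * ((n.choose v - n.choose (v + 1)) * (2 * k - 1) ^ v) =
        (n.choose v - n.choose (v + 1)) * (2 * k - 1) ^ (v + 1) := by
      ring
    rw [this]
  · rw [eb, if_neg (by omega : ¬ (n + 1 + (h + 1)) % 2 = 0)]
    exact Nat.zero_le _

lemma eb_zero_step (k n : ℕ) : eb k (n + 1) 0 ≤ eb k n 1 := by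
  rcases Nat.eq_zero_or_pos ((n + 1) % 2) with hp | hp
  · rw [eb, eb, if_pos (by omega : (n + 1 + 0) % 2 = 0), if_pos hp]
    have hn1 : 1 ≤ n := by omega
    set u := (n + 1) / 2 with hu
    have hu1 : 1 ≤ u := by omega
    have pasc1 : (n + 1).choose u = n.choose (u - 1) + n.choose u := by
      have h5 := Nat.choose_succ_succ' n (u - 1)
      have h6 : u - 1 + 1 = u := by omega
      rw [h6] at h5
      exact h5
    have pasc2 : (n + 1).choose (u + 1) = n.choose u + n.choose (u + 1) :=
      Nat.choose_succ_succ' n u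
    have symm : n.choose (u - 1) = n.choose u := by
      have hnu : n - u = u - 1 := by omega
      have := Nat.choose_symm (by omega : u ≤ n)
      rw [hnu] at this
      exact this
    rw [pasc1, pasc2, symm]
    apply Nat.mul_le_mul_right
    omega
  · rw [eb, if_neg (by omega : ¬ (n + 1 + 0) % 2 = 0)]
    exact Nat.zero_le _

lemma qb_even (k m : ℕ) : qb k (2 * m) 0 = Nat.centralBinom m * (2 * k - 1) ^ m := by
  rw [qb, if_pos (by omega : (2 * m + 0) % 2 = 0)]
  have : (2 * m + 0) / 2 = m := by omega
  rw [this, Nat.centralBinom]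

lemma eb_even (k m : ℕ) :
    (m + 1) * eb k (2 * m) 0 = Nat.centralBinom m * (2 * k - 1) ^ m := by
  rw [eb, if_pos (by omega : (2 * m + 0) % 2 = 0)]
  have hm : (2 * m + 0) / 2 = m := by omega
  rw [hm]
  have hid : (2 * m).choose (m + 1) * (m + 1) = (2 * m).choose m * m := by
    have := Nat.choose_succ_right_eq (2 * m) m
    simpa [two_mul] using this
  have hle : (2 * m).choose (m + 1) ≤ (2 * m).choose m := choose_decr (by omega)
  have key : (m + 1) * ((2 * m).choose m - (2 * m).choose (m + 1)) = (2 * m).choose m := by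
    rw [Nat.mul_sub]
    have e1 : (m + 1) * (2 * m).choose (m + 1) = m * (2 * m).choose m := by
      rw [mul_comm ((2*m).choose (m+1)) (m+1)] at hid
      rw [hid, mul_comm]
    rw [e1]
    have e2 : (m + 1) * (2 * m).choose m = m * (2 * m).choose m + (2 * m).choose m := by ring
    omega
  rw [← mul_assoc, key, Nat.centralBinom]

end SupTau

namespace SupTau

lemma cnt_le_qb {k : ℕ} (hk : 1 ≤ k) :
    ∀ n, cnt k n 0 ≤ qb k n 0 ∧ ∀ h, cnt k n (h + 1) ≤ 2 * qb k n (h + 1) := by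
  intro n
  induction n with
  | zero =>
    constructor
    · rw [cnt_zero_zero, qb]
      norm_num
    · intro h
      rw [cnt_zero_succ]
      exact Nat.zero_le _
  | succ n ih =>
    constructor
    · rw [cnt_succ_zero]
      exact le_trans (ih.2 0) (qb_zero_step k n)
    · intro h
      match h with
      | 0 =>
        rw [cnt_succ_one, qb_pascal k n 0]
        have e0 : qb k n (0 + 2) = qb k n 2 := by norm_num
        have h1 : 2 * k * cnt k n 0 ≤ 2 * ((2 * k - 1) * qb k n 0) := by
          calc 2 * k * cnt k n 0 ≤ 2 * k * qb k n 0 :=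
                Nat.mul_le_mul_left _ (ih.1)
            _ ≤ 2 * (2 * k - 1) * qb k n 0 :=
                Nat.mul_le_mul_right _ (by omega)
            _ = 2 * ((2 * k - 1) * qb k n 0) := by ring
        have h2 : cnt k n 2 ≤ 2 * qb k n 2 := ih.2 1
        omega
      | Nat.succ h' =>
        rw [cnt_succ_two, qb_pascal k n (h' + 1)]
        have e0 : qb k n (h' + 1 + 2) = qb k n (h' + 3) := by
          congr 1
        have h1 : (2 * k - 1) * cnt k n (h' + 1) ≤ (2 * k - 1) * (2 * qb k n (h' + 1)) :=
          Nat.mul_le_mul_left _ (ih.2 h')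
        have h2 : cnt k n (h' + 3) ≤ 2 * qb k n (h' + 3) := ih.2 (h' + 2)
        have h3 : (2 * k - 1) * (2 * qb k n (h' + 1)) = 2 * ((2 * k - 1) * qb k n (h' + 1)) := by
          ring
        omega

lemma eb_le_cnt {k : ℕ} (hk : 1 ≤ k) :
    ∀ n h, eb k n h ≤ cnt k n h := by
  intro n
  induction n with
  | zero =>
    intro h
    match h with
    | 0 =>
      rw [cnt_zero_zero, eb]
      norm_num
    | Nat.succ h' =>
      rw [show h'.succ = h' + 1 from rfl, cnt_zero_succ, eb]
      rcases Nat.eq_zero_or_pos ((0 + (h' + 1)) % 2) with hp | hp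
      · rw [if_pos hp]
        have : Nat.choose 0 ((0 + (h' + 1)) / 2) = 0 :=
          Nat.choose_eq_zero_of_lt (by omega)
        rw [this]
        simp
      · rw [if_neg (by omega)]
  | succ n ih =>
    intro h
    match h with
    | 0 =>
      rw [cnt_succ_zero]
      exact le_trans (eb_zero_step k n) (ih 1)
    | 1 =>
      rw [cnt_succ_one]
      calc eb k (n + 1) 1 ≤ (2 * k - 1) * eb k n 0 + eb k n 2 := eb_pascal_le k n 0
        _ ≤ 2 * k * cnt k n 0 + cnt k n 2 := by
            have h1 : (2 * k - 1) * eb k n 0 ≤ 2 * k * cnt k n 0 :=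
              Nat.mul_le_mul (by omega) (ih 0)
            have h2 : eb k n 2 ≤ cnt k n 2 := ih 2
            omega
    | Nat.succ (Nat.succ h') =>
      rw [cnt_succ_two]
      calc eb k (n + 1) (h' + 2) ≤ (2 * k - 1) * eb k n (h' + 1) + eb k n (h' + 3) :=
            eb_pascal_le k n (h' + 1)
        _ ≤ (2 * k - 1) * cnt k n (h' + 1) + cnt k n (h' + 3) := by
            have h1 : (2 * k - 1) * eb k n (h' + 1) ≤ (2 * k - 1) * cnt k n (h' + 1) :=
              Nat.mul_le_mul_left _ (ih (h' + 1))
            have h2 : eb k n (h' + 3) ≤ cnt k n (h' + 3) := ih (h' + 3)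
            omega

/-- the two-sided bound on the number of identity words -/
lemma cnt_upper {k m : ℕ} (hk : 1 ≤ k) :
    cnt k (2 * m) 0 ≤ Nat.centralBinom m * (2 * k - 1) ^ m := by
  rw [← qb_even]
  exact (cnt_le_qb hk (2 * m)).1

lemma cnt_lower {k m : ℕ} (hk : 1 ≤ k) :
    Nat.centralBinom m * (2 * k - 1) ^ m ≤ (m + 1) * cnt k (2 * m) 0 := by
  rw [← eb_even]
  exact Nat.mul_le_mul_left _ (eb_le_cnt hk (2 * m) 0)

lemma centralBinom_le_four_pow (m : ℕ) : Nat.centralBinom m ≤ 4 ^ m := by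
  have h1 : Nat.centralBinom m ≤ ∑ i ∈ Finset.range (2 * m + 1), (2 * m).choose i := by
    apply Finset.single_le_sum (f := fun i => (2 * m).choose i)
    · intro i _
      exact Nat.zero_le _
    · exact Finset.mem_range.mpr (by omega)
  have h2 : (∑ i ∈ Finset.range (2 * m + 1), (2 * m).choose i) = 2 ^ (2 * m) :=
    Nat.sum_range_choose (2 * m)
  have h3 : (2:ℕ) ^ (2 * m) = 4 ^ m := by
    rw [pow_mul]
    norm_num
  calc Nat.centralBinom m ≤ 2 ^ (2 * m) := h1.trans h2.le
    _ = 4 ^ m := h3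

end SupTau

namespace SupTau

lemma mk_eq_one_iff {α : Type*} [DecidableEq α] (L : List (α × Bool)) :
    FreeGroup.mk L = 1 ↔ FreeGroup.reduce L = [] := by
  rw [← FreeGroup.toWord_eq_nil_iff, FreeGroup.toWord_mk]

lemma nat_card_eq (k p : ℕ) :
    Nat.card {w : Fin p → Letter k // FreeGroup.mk (List.ofFn w) = 1} = cnt k p 0 := by
  classical
  rw [Nat.card_congr (Equiv.subtypeEquivRight (q := fun w : Fin p → Letter k =>
    (FreeGroup.reduce (List.ofFn w)).length = 0) (fun w => by
      simp only [mk_eq_one_iff, List.length_eq_zero_iff]))]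
  rw [Nat.card_eq_fintype_card, Fintype.card_subtype]
  rfl

end SupTau

namespace SupTau

theorem sup_tau_eq (k : ℕ) (hk : 2 ≤ k) :
    (⨆ p : ℕ+, tau k p ^ ((1 : ℝ) / p)) = Real.sqrt (2 * (k : ℝ) - 1) / k := by
  have hk1 : 1 ≤ k := by omega
  have hK : (2 : ℝ) ≤ (k : ℝ) := by exact_mod_cast hk
  have hK0 : (0 : ℝ) < (k : ℝ) := by linarith
  set L : ℝ := Real.sqrt (2 * (k : ℝ) - 1) / k with hL
  have hL0 : 0 ≤ L := div_nonneg (Real.sqrt_nonneg _) hK0.le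
  have hLsq : (2 * (k : ℝ)) ^ 2 * L ^ 2 = 4 * (2 * (k : ℝ) - 1) := by
    rw [hL, div_pow, Real.sq_sqrt (by linarith : 0 ≤ 2 * (k : ℝ) - 1)]
    field_simp
    ring
  have htau : ∀ p : ℕ, tau k p = (cnt k p 0 : ℝ) / (2 * (k : ℝ)) ^ p := by
    intro p
    rw [tau, nat_card_eq]
  have htau0 : ∀ p : ℕ, 0 ≤ tau k p := by
    intro p
    rw [htau]
    positivity
  have hpow_pos : ∀ p : ℕ, (0 : ℝ) < (2 * (k : ℝ)) ^ p := fun p => by positivity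
  have hEq : ∀ m : ℕ, (2 * (k : ℝ)) ^ (2 * m) * L ^ (2 * m) =
      4 ^ m * (2 * (k : ℝ) - 1) ^ m := by
    intro m
    calc (2 * (k : ℝ)) ^ (2 * m) * L ^ (2 * m)
        = ((2 * (k : ℝ)) ^ 2 * L ^ 2) ^ m := by rw [pow_mul, pow_mul, ← mul_pow]
      _ = (4 * (2 * (k : ℝ) - 1)) ^ m := by rw [hLsq]
      _ = 4 ^ m * (2 * (k : ℝ) - 1) ^ m := mul_pow _ _ _
  have hcast_sub : ((2 * k - 1 : ℕ) : ℝ) = 2 * (k : ℝ) - 1 := by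
    have : 1 ≤ 2 * k := by omega
    push_cast [Nat.cast_sub this]
    ring
  -- upper bound on tau for even length
  have htau_le : ∀ m : ℕ, tau k (2 * m) ≤ L ^ (2 * m) := by
    intro m
    have h1 : cnt k (2 * m) 0 ≤ 4 ^ m * (2 * k - 1) ^ m :=
      le_trans (cnt_upper hk1)
        (Nat.mul_le_mul_right _ (centralBinom_le_four_pow m))
    have hc : (cnt k (2 * m) 0 : ℝ) ≤ (4 : ℝ) ^ m * (2 * (k : ℝ) - 1) ^ m := by
      calc (cnt k (2 * m) 0 : ℝ) ≤ ((4 ^ m * (2 * k - 1) ^ m : ℕ) : ℝ) := by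
            exact_mod_cast h1
        _ = (4 : ℝ) ^ m * (2 * (k : ℝ) - 1) ^ m := by
            push_cast [hcast_sub]
            ring
    rw [htau, div_le_iff₀ (hpow_pos (2 * m))]
    calc (cnt k (2 * m) 0 : ℝ) ≤ (4 : ℝ) ^ m * (2 * (k : ℝ) - 1) ^ m := hc
      _ = (2 * (k : ℝ)) ^ (2 * m) * L ^ (2 * m) := (hEq m).symm
      _ = L ^ (2 * m) * (2 * (k : ℝ)) ^ (2 * m) := by ring
  -- upper bound for the sup terms
  have upper : ∀ p : ℕ+, tau k p ^ ((1 : ℝ) / p) ≤ L := by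
    intro p
    have hp0 : 0 < (p : ℕ) := p.2
    have hpR : (0 : ℝ) < ((p : ℕ) : ℝ) := by exact_mod_cast hp0
    rcases Nat.even_or_odd (p : ℕ) with ⟨m, hm⟩ | hodd
    · have hm' : (p : ℕ) = 2 * m := by omega
      have h1 : tau k p ≤ L ^ (p : ℕ) := by
        rw [hm']
        exact htau_le m
      have h2 := Real.rpow_le_rpow (htau0 p) h1 (by positivity : (0:ℝ) ≤ 1 / ((p : ℕ) : ℝ))
      calc tau k p ^ ((1 : ℝ) / p) ≤ (L ^ (p : ℕ)) ^ ((1 : ℝ) / p) := h2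
        _ = L := by
          rw [← Real.rpow_natCast L (p : ℕ), ← Real.rpow_mul hL0]
          rw [mul_one_div, div_self hpR.ne', Real.rpow_one]
    · obtain ⟨t, ht⟩ := hodd
      have hc0 : cnt k (p : ℕ) 0 = 0 := cnt_parity _ _ _ (by omega : ((p : ℕ) + 0) % 2 = 1)
      have : tau k p = 0 := by
        rw [htau, hc0]
        simp
      rw [this, Real.zero_rpow (by positivity : (1 : ℝ) / ((p : ℕ) : ℝ) ≠ 0)]
      exact hL0
  have hbdd : BddAbove (Set.range fun p : ℕ+ => tau k p ^ ((1 : ℝ) / p)) := by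
    refine ⟨L, ?_⟩
    rintro x ⟨p, rfl⟩
    exact upper p
  refine le_antisymm (ciSup_le upper) ?_
  -- lower bound: terms approach L
  set S := ⨆ p : ℕ+, tau k p ^ ((1 : ℝ) / p) with hS
  have key : ∀ m : ℕ, 1 ≤ m →
      L * (((2 * m * (m + 1) : ℕ) : ℝ)) ^ (-((1 : ℝ) / ((2 * m : ℕ) : ℝ))) ≤ S := by
    intro m hm
    have hm0 : 0 < m := hm
    have hden : (0 : ℝ) < ((2 * m * (m + 1) : ℕ) : ℝ) := by
      have : 0 < 2 * m * (m + 1) := by positivity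
      exact_mod_cast this
    have h2m : (0 : ℝ) < ((2 * m : ℕ) : ℝ) := by
      have : 0 < 2 * m := by omega
      exact_mod_cast this
    -- nat inequality
    have hN : 4 ^ m * (2 * k - 1) ^ m ≤ 2 * m * (m + 1) * cnt k (2 * m) 0 := by
      calc 4 ^ m * (2 * k - 1) ^ m
          ≤ (2 * m * Nat.centralBinom m) * (2 * k - 1) ^ m :=
            Nat.mul_le_mul_right _ (Nat.four_pow_le_two_mul_self_mul_centralBinom m hm0)
        _ = 2 * m * (Nat.centralBinom m * (2 * k - 1) ^ m) := by ring
        _ ≤ 2 * m * ((m + 1) * cnt k (2 * m) 0) :=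
            Nat.mul_le_mul_left _ (cnt_lower hk1)
        _ = 2 * m * (m + 1) * cnt k (2 * m) 0 := by ring
    have hNr : (4 : ℝ) ^ m * (2 * (k : ℝ) - 1) ^ m ≤
        ((2 * m * (m + 1) : ℕ) : ℝ) * (cnt k (2 * m) 0 : ℝ) := by
      calc (4 : ℝ) ^ m * (2 * (k : ℝ) - 1) ^ m
          = ((4 ^ m * (2 * k - 1) ^ m : ℕ) : ℝ) := by
            push_cast [hcast_sub]
            ring
        _ ≤ ((2 * m * (m + 1) * cnt k (2 * m) 0 : ℕ) : ℝ) := by exact_mod_cast hN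
        _ = ((2 * m * (m + 1) : ℕ) : ℝ) * (cnt k (2 * m) 0 : ℝ) := by push_cast; ring
    have h1 : L ^ (2 * m) ≤ ((2 * m * (m + 1) : ℕ) : ℝ) * tau k (2 * m) := by
      rw [htau, ← mul_div_assoc, le_div_iff₀ (hpow_pos (2 * m))]
      calc L ^ (2 * m) * (2 * (k : ℝ)) ^ (2 * m)
          = (2 * (k : ℝ)) ^ (2 * m) * L ^ (2 * m) := mul_comm _ _
        _ = 4 ^ m * (2 * (k : ℝ) - 1) ^ m := hEq m
        _ ≤ ((2 * m * (m + 1) : ℕ) : ℝ) * (cnt k (2 * m) 0 : ℝ) := hNr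
    have h2 : L ^ (2 * m) / ((2 * m * (m + 1) : ℕ) : ℝ) ≤ tau k (2 * m) :=
      (div_le_iff₀ hden).mpr (h1.trans_eq (mul_comm _ _))
    have h3 := Real.rpow_le_rpow (by positivity) h2
      (by positivity : (0:ℝ) ≤ 1 / ((2 * m : ℕ) : ℝ))
    have h4 : (L ^ (2 * m) / ((2 * m * (m + 1) : ℕ) : ℝ)) ^ ((1:ℝ) / ((2 * m : ℕ) : ℝ)) =
        L * (((2 * m * (m + 1) : ℕ) : ℝ)) ^ (-((1 : ℝ) / ((2 * m : ℕ) : ℝ))) := by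
      rw [Real.div_rpow (by positivity) hden.le]
      rw [← Real.rpow_natCast L (2 * m), ← Real.rpow_mul hL0]
      rw [mul_one_div, div_self h2m.ne', Real.rpow_one]
      rw [Real.rpow_neg hden.le, div_eq_mul_inv]
    -- term of the sup
    have hterm : tau k (2 * m) ^ ((1:ℝ) / ((2 * m : ℕ) : ℝ)) ≤ S := by
      have hple := le_ciSup hbdd (⟨2 * m, by omega⟩ : ℕ+)
      exact hple
    calc L * (((2 * m * (m + 1) : ℕ) : ℝ)) ^ (-((1 : ℝ) / ((2 * m : ℕ) : ℝ)))
        = (L ^ (2 * m) / ((2 * m * (m + 1) : ℕ) : ℝ)) ^ ((1:ℝ) / ((2 * m : ℕ) : ℝ)) := h4.symm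
      _ ≤ tau k (2 * m) ^ ((1:ℝ) / ((2 * m : ℕ) : ℝ)) := h3
      _ ≤ S := hterm
  -- the lower-bound sequence tends to L
  have htend : Filter.Tendsto
      (fun m : ℕ => L * (((2 * m * (m + 1) : ℕ) : ℝ)) ^ (-((1 : ℝ) / ((2 * m : ℕ) : ℝ))))
      Filter.atTop (nhds L) := by
    have hg : Filter.Tendsto
        (fun m : ℕ => Real.log ((2 * m * (m + 1) : ℕ) : ℝ) / ((2 * m : ℕ) : ℝ))
        Filter.atTop (nhds 0) := by
      apply squeeze_zero'
      · filter_upwards [Filter.eventually_atTop.mpr ⟨1, fun m hm => hm⟩] with m hm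
        apply div_nonneg
        · apply Real.log_nonneg
          have h9 : 0 < 2 * m * (m + 1) := by positivity
          exact_mod_cast h9
        · positivity
      · filter_upwards [Filter.eventually_atTop.mpr ⟨1, fun m hm => hm⟩] with m hm
        show Real.log ((2 * m * (m + 1) : ℕ) : ℝ) / ((2 * m : ℕ) : ℝ) ≤
          4 * (Real.log (2 * (m:ℝ) + 2) / (2 * (m:ℝ) + 2))
        have hmR : (1 : ℝ) ≤ (m : ℝ) := by exact_mod_cast hm
        have harg : (0 : ℝ) < ((2 * m * (m + 1) : ℕ) : ℝ) := by
          have : 0 < 2 * m * (m + 1) := by positivity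
          exact_mod_cast this
        have hle : ((2 * m * (m + 1) : ℕ) : ℝ) ≤ (2 * (m:ℝ) + 2) ^ 2 := by
          push_cast
          nlinarith
        have hlog1 : Real.log ((2 * m * (m + 1) : ℕ) : ℝ) ≤ 2 * Real.log (2 * (m:ℝ) + 2) := by
          calc Real.log ((2 * m * (m + 1) : ℕ) : ℝ) ≤ Real.log ((2 * (m:ℝ) + 2) ^ 2) :=
                Real.log_le_log harg hle
            _ = 2 * Real.log (2 * (m:ℝ) + 2) := by
                rw [Real.log_pow]
                norm_num
        have hlog0 : 0 ≤ Real.log (2 * (m:ℝ) + 2) := Real.log_nonneg (by linarith)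
        have hcast2m : ((2 * m : ℕ) : ℝ) = 2 * (m:ℝ) := by push_cast; ring
        rw [hcast2m]
        have e9 : 4 * (Real.log (2 * (m:ℝ) + 2) / (2 * (m:ℝ) + 2)) =
            (4 * Real.log (2 * (m:ℝ) + 2)) / (2 * (m:ℝ) + 2) := by ring
        rw [e9, div_le_div_iff₀ (by linarith : (0:ℝ) < 2 * (m:ℝ))
          (by linarith : (0:ℝ) < 2 * (m:ℝ) + 2)]
        nlinarith [hlog1, hlog0, hmR]
      · -- 4 * (log (2m+2)/(2m+2)) → 0
        have hbase := Real.tendsto_pow_log_div_mul_add_atTop 1 0 1 one_ne_zero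
        simp only [pow_one, one_mul, add_zero] at hbase
        have hcomp : Filter.Tendsto (fun m : ℕ => (2 * (m:ℝ) + 2)) Filter.atTop Filter.atTop := by
          apply Filter.tendsto_atTop_add_const_right
          exact (tendsto_natCast_atTop_atTop (R := ℝ)).const_mul_atTop (by norm_num)
        have h5 := (hbase.comp hcomp).const_mul (4 : ℝ)
        rw [mul_zero] at h5
        simpa [Function.comp] using h5
      
    have hexp : Filter.Tendsto
        (fun m : ℕ => Real.exp (-(Real.log ((2 * m * (m + 1) : ℕ) : ℝ) / ((2 * m : ℕ) : ℝ))))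
        Filter.atTop (nhds 1) := by
      have hgneg := hg.neg
      rw [neg_zero] at hgneg
      have := (Real.continuous_exp.tendsto 0).comp hgneg
      simpa [Function.comp_def] using this
    have heq : ∀ᶠ m : ℕ in Filter.atTop,
        Real.exp (-(Real.log ((2 * m * (m + 1) : ℕ) : ℝ) / ((2 * m : ℕ) : ℝ))) =
        (((2 * m * (m + 1) : ℕ) : ℝ)) ^ (-((1 : ℝ) / ((2 * m : ℕ) : ℝ))) := by
      filter_upwards [Filter.eventually_atTop.mpr ⟨1, fun m hm => hm⟩] with m hm
      have harg : (0 : ℝ) < ((2 * m * (m + 1) : ℕ) : ℝ) := by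
        have : 0 < 2 * m * (m + 1) := by positivity
        exact_mod_cast this
      rw [Real.rpow_def_of_pos harg]
      congr 1
      ring
    have hmain : Filter.Tendsto
        (fun m : ℕ => (((2 * m * (m + 1) : ℕ) : ℝ)) ^ (-((1 : ℝ) / ((2 * m : ℕ) : ℝ))))
        Filter.atTop (nhds 1) := hexp.congr' heq
    have := hmain.const_mul L
    simpa using this
  exact le_of_tendsto htend
    (Filter.eventually_atTop.mpr ⟨1, fun m hm => key m hm⟩)

end SupTau

/-- `sup_p τ_p^{1/p} = √(2k-1)/k`; in particular for `k = 2` it equals `√3/2`. -/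
theorem sup_tau_rpow_eq (k : ℕ) (hk : 2 ≤ k) :
    (⨆ p : ℕ+, tau k p ^ ((1 : ℝ) / p)) = Real.sqrt (2 * (k : ℝ) - 1) / k ∧
    (⨆ p : ℕ+, tau 2 p ^ ((1 : ℝ) / p)) = Real.sqrt 3 / 2 := by
  constructor
  · exact SupTau.sup_tau_eq k hk
  · rw [SupTau.sup_tau_eq 2 (le_refl 2)]
    norm_num
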